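/- arXiv:2201.06475 — 2 statements merged into one kernel-verified Lean document; each statement's English description precedes it below -/
import Mathlib

section
/- In the 3-for-1 variation of infinite Hex, in which on each round Red places three stones on distinct empty cells and then Blue places one stone on an empty cell, Red has a winning strategy: a strategy such that in every infinite play consistent with it, Red fulfills the standard winning condition in the resulting coloring. -/
/-- Hex adjacency on the infinite board `ℤ × ℤ`: `p` and `q` are adjacent iff
`q - p ∈ {(1,0), (-1,0), (0,1), (0,-1), (1,1), (-1,-1)}`. -/
def HexAdj (p q : ℤ × ℤ) : Prop :=
  q - p ∈ ({(1, 0), (-1, 0), (0, 1), (0, -1), (1, 1), (-1, -1)} : Set (ℤ × ℤ))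

/-- A red `ℤ`-chain of the coloring `c`. -/
def IsRedChain (c : ℤ × ℤ → Option Bool) (f : ℤ → ℤ × ℤ) : Prop :=
  ∀ n : ℤ, HexAdj (f n) (f (n + 1)) ∧ c (f n) = some true

/-- A blue `ℤ`-chain of the coloring `c`. -/
def IsBlueChain (c : ℤ × ℤ → Option Bool) (f : ℤ → ℤ × ℤ) : Prop :=
  ∀ n : ℤ, HexAdj (f n) (f (n + 1)) ∧ c (f n) = some false

/-- The convergence requirement for a winning red chain: for every `(a,b)` the positive
end eventually has both coordinates `> a`, `> b`, and the negative end `< a`, `< b`. -/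
def RedConverges (f : ℤ → ℤ × ℤ) : Prop :=
  ∀ a b : ℤ, ∃ N : ℕ, ∀ n : ℕ, N ≤ n →
    a < (f n).1 ∧ b < (f n).2 ∧ (f (-(n : ℤ))).1 < a ∧ (f (-(n : ℤ))).2 < b

/-- The convergence requirement for a winning blue chain. -/
def BlueConverges (f : ℤ → ℤ × ℤ) : Prop :=
  ∀ a b : ℤ, ∃ N : ℕ, ∀ n : ℕ, N ≤ n →
    (f n).1 < a ∧ b < (f n).2 ∧ a < (f (-(n : ℤ))).1 ∧ (f (-(n : ℤ))).2 < b

/-- Red fulfills the standard winning condition in the coloring `c`. -/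
def RedWinsStd (c : ℤ × ℤ → Option Bool) : Prop :=
  ∃ f : ℤ → ℤ × ℤ, IsRedChain c f ∧ RedConverges f

/-- Blue fulfills the standard winning condition in the coloring `c`. -/
def BlueWinsStd (c : ℤ × ℤ → Option Bool) : Prop :=
  ∃ f : ℤ → ℤ × ℤ, IsBlueChain c f ∧ BlueConverges f

namespace ThreeForOne
open Classical

noncomputable section

/-- An enumeration of `ℤ`. -/
def iz (k : ℕ) : ℤ := if k % 2 = 0 then (k / 2 : ℤ) else -((k / 2 : ℤ)) - 1

lemma iz_inj : Function.Injective iz := by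
  intro a b hab
  unfold iz at hab
  rcases Nat.even_or_odd a with ⟨x, hx⟩ | ⟨x, hx⟩ <;>
    rcases Nat.even_or_odd b with ⟨y, hy⟩ | ⟨y, hy⟩ <;> subst hx hy <;> simp at hab <;> omega

lemma iz_surj (x : ℤ) : ∃ k, iz k = x := by
  rcases le_or_gt 0 x with h | h
  · exact ⟨(2 * x.toNat), by unfold iz; simp; omega⟩
  · refine ⟨2 * (-x - 1).toNat + 1, ?_⟩
    unfold iz
    simp [Nat.mul_mod_right]
    omega

/-- An enumeration of the band of the three central diagonals. -/
def eBand (k : ℕ) : ℤ × ℤ :=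
  let x := iz (k / 3)
  if k % 3 = 0 then (x, x) else if k % 3 = 1 then (x, x + 1) else (x + 1, x)

lemma eBand_inj : Function.Injective eBand := by
  intro a b hab
  unfold eBand at hab
  have h3 : ∀ n : ℕ, n % 3 = 0 ∨ n % 3 = 1 ∨ n % 3 = 2 := by omega
  rcases h3 a with ha | ha | ha <;> rcases h3 b with hb | hb | hb <;>
      simp [ha, hb, Prod.ext_iff] at hab <;> try omega
  all_goals first
    | (have h := iz_inj hab; omega)
    | (have h := iz_inj hab.1; omega)

lemma eBand_surj0 (x : ℤ) : ∃ k, eBand k = (x, x) := by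
  obtain ⟨m, hm⟩ := iz_surj x
  exact ⟨3 * m, by unfold eBand; simp [Nat.mul_mod_right, Nat.mul_div_cancel_left, hm]⟩

lemma eBand_surj1 (x : ℤ) : ∃ k, eBand k = (x, x + 1) := by
  obtain ⟨m, hm⟩ := iz_surj x
  refine ⟨3 * m + 1, ?_⟩
  unfold eBand
  have h1 : (3 * m + 1) % 3 = 1 := by omega
  have h2 : (3 * m + 1) / 3 = m := by omega
  simp [h1, h2, hm]

lemma eBand_surj2 (x : ℤ) : ∃ k, eBand k = (x + 1, x) := by
  obtain ⟨m, hm⟩ := iz_surj x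
  refine ⟨3 * m + 2, ?_⟩
  unfold eBand
  have h1 : (3 * m + 2) % 3 = 2 := by omega
  have h2 : (3 * m + 2) / 3 = m := by omega
  simp [h1, h2, hm]

def blueSet (h : List (ℤ × ℤ)) : Set (ℤ × ℤ) := {q | ∃ i, i % 4 = 3 ∧ h[i]? = some q}

def respCore (B : Set (ℤ × ℤ)) : ℤ × ℤ → List (ℤ × ℤ)
  | (x, y) =>
    if y = x then [(x - 1, x - 1), (x + 1, x + 1)]
    else if y = x + 1 then
      (if (x, x) ∈ B then [(x, x - 1), (x + 1, x)]
       else if (y, y) ∈ B then [(y, y - 1), (y + 1, y)]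
       else [(x, x), (y, y)])
    else if x = y + 1 then
      (if (y, y) ∈ B then [(y - 1, y), (y, y + 1)]
       else if (x, x) ∈ B then [(x - 1, x), (x, x + 1)]
       else [(y, y), (x, x)])
    else []

def respList (h : List (ℤ × ℤ)) : List (ℤ × ℤ) :=
  match h.getLast? with
  | none => []
  | some z => respCore (blueSet h) z


lemma respList_shape (h : List (ℤ × ℤ)) :
    respList h = [] ∨ ∃ a b, a ≠ b ∧ respList h = [a, b] := by
  unfold respList
  rcases h.getLast? with _ | z
  · exact Or.inl rfl
  · obtain ⟨x, y⟩ := z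
    simp only [respCore]
    split_ifs <;> first
      | exact Or.inl rfl
      | (refine Or.inr ⟨_, _, ?_, rfl⟩; simp [Prod.ext_iff]; try omega)

lemma exists_fill (s : List (ℤ × ℤ)) : ∃ k, eBand k ∉ s := by
  by_contra hc
  push_neg at hc
  have h1 : (Set.range eBand).Infinite := Set.infinite_range_of_injective eBand_inj
  have h2 : (Set.range eBand) ⊆ {q | q ∈ s} := by
    rintro q ⟨k, rfl⟩; exact hc k
  exact h1 (Set.Finite.subset (s.finite_toSet) h2)

def fill (s : List (ℤ × ℤ)) : ℤ × ℤ := eBand (Nat.find (exists_fill s))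

lemma fill_not_mem (s : List (ℤ × ℤ)) : fill s ∉ s := Nat.find_spec (exists_fill s)

lemma fill_min (s : List (ℤ × ℤ)) {j : ℕ} (hj : j < Nat.find (exists_fill s)) :
    eBand j ∈ s := by
  have := Nat.find_min (exists_fill s) hj
  simpa using this

def avail (h : List (ℤ × ℤ)) : List (ℤ × ℤ) :=
  match respList h with
  | [] => []
  | [a] => if a ∈ h then [] else [a]
  | a :: b :: _ =>
      (if a ∈ h then [] else [a]) ++ (if b ∈ h then [] else [b])

lemma avail_shape (h : List (ℤ × ℤ)) :
    avail h = [] ∨ (∃ a, avail h = [a] ∧ a ∉ h) ∨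
      (∃ a b, a ≠ b ∧ avail h = [a, b] ∧ a ∉ h ∧ b ∉ h) := by
  rcases respList_shape h with h0 | ⟨a, b, hab, h2⟩
  · left; simp [avail, h0]
  · unfold avail
    rw [h2]
    by_cases ha : a ∈ h <;> by_cases hb : b ∈ h <;>
      simp [ha, hb]
    all_goals first
      | trivial
      | exact Or.inl rfl
      | exact Or.inr (Or.inl ⟨b, rfl, hb⟩)
      | exact Or.inr (Or.inl ⟨a, rfl, ha⟩)
      | exact Or.inr (Or.inr ⟨a, b, hab, rfl, ha, hb⟩)
      | exact ⟨a.1, a.2, b.1, b.2, fun h1 h2 => hab (Prod.ext h1 h2), ⟨rfl, rfl⟩, ha, hb⟩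

def stone1 (h : List (ℤ × ℤ)) : ℤ × ℤ := (avail h).headD (fill h)
def stone2 (h : List (ℤ × ℤ)) : ℤ × ℤ := ((avail h)[1]?).getD (fill (stone1 h :: h))
def stone3 (h : List (ℤ × ℤ)) : ℤ × ℤ := fill (stone2 h :: stone1 h :: h)

def strat (h : List (ℤ × ℤ)) : (ℤ × ℤ) × (ℤ × ℤ) × (ℤ × ℤ) :=
  (stone1 h, stone2 h, stone3 h)

lemma strat_cover {h : List (ℤ × ℤ)} {q : ℤ × ℤ} (hq : q ∈ respList h) (hq2 : q ∉ h) :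
    q = stone1 h ∨ q = stone2 h := by
  have hmem : q ∈ avail h := by
    rcases respList_shape h with h0 | ⟨a, b, hab, h2⟩
    · rw [h0] at hq; simp at hq
    · rw [h2] at hq
      unfold avail
      rw [h2]
      simp at hq
      rcases hq with hq | hq
      · subst hq
        by_cases hb : b ∈ h <;> simp [hq2, hb]
      · subst hq
        by_cases ha : a ∈ h <;> simp [hq2, ha]
  rcases avail_shape h with h0 | ⟨a, h1, _⟩ | ⟨a, b, hab, h2, _, _⟩
  · rw [h0] at hmem; simp at hmem
  · rw [h1] at hmem; simp at hmem
    left; simp [stone1, h1, hmem]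
  · rw [h2] at hmem; simp at hmem
    rcases hmem with rfl | rfl
    · left; simp [stone1, h2]
    · right; simp [stone2, h2]

lemma strat_spec (h : List (ℤ × ℤ)) :
    (strat h).1 ∉ h ∧ (strat h).2.1 ∉ h ∧ (strat h).2.2 ∉ h ∧
    (strat h).1 ≠ (strat h).2.1 ∧ (strat h).1 ≠ (strat h).2.2 ∧
    (strat h).2.1 ≠ (strat h).2.2 := by
  have h3 : ∀ s : List (ℤ×ℤ), fill s ∉ s := fill_not_mem
  have hs3 : (strat h).2.2 = stone3 h := rfl
  have k1 : stone3 h ∉ h := fun hmem =>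
    (h3 (stone2 h :: stone1 h :: h)) (List.mem_cons_of_mem _ (List.mem_cons_of_mem _ hmem))
  have k2 : stone1 h ≠ stone3 h := by
    intro heq
    exact (h3 (stone2 h :: stone1 h :: h)) (show stone3 h ∈ _ by rw [← heq]; simp)
  have k3 : stone2 h ≠ stone3 h := by
    intro heq
    exact (h3 (stone2 h :: stone1 h :: h)) (show stone3 h ∈ _ by rw [← heq]; simp)
  rcases avail_shape h with h0 | ⟨a, h1, ha⟩ | ⟨a, b, hab, h2, ha, hb⟩
  · have e1 : stone1 h = fill h := by simp [stone1, h0]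
    have e2 : stone2 h = fill (stone1 h :: h) := by simp [stone2, h0]
    refine ⟨by rw [show (strat h).1 = stone1 h from rfl, e1]; exact h3 h, ?_, k1, ?_, k2, k3⟩
    · show stone2 h ∉ h
      rw [e2]; intro hmem; exact (h3 (stone1 h :: h)) (List.mem_cons_of_mem _ hmem)
    · show stone1 h ≠ stone2 h
      rw [e2]; intro heq; exact (h3 (stone1 h :: h)) (by rw [← heq]; simp)
  · have e1 : stone1 h = a := by simp [stone1, h1]
    have e2 : stone2 h = fill (stone1 h :: h) := by simp [stone2, h1]
    refine ⟨by rw [show (strat h).1 = stone1 h from rfl, e1]; exact ha, ?_, k1, ?_, k2, k3⟩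
    · show stone2 h ∉ h
      rw [e2]; intro hmem; exact (h3 (stone1 h :: h)) (List.mem_cons_of_mem _ hmem)
    · show stone1 h ≠ stone2 h
      rw [e2]; intro heq; exact (h3 (stone1 h :: h)) (by rw [← heq]; simp)
  · have e1 : stone1 h = a := by simp [stone1, h2]
    have e2 : stone2 h = b := by simp [stone2, h2]
    exact ⟨by rw [show (strat h).1 = stone1 h from rfl, e1]; exact ha,
      by rw [show (strat h).2.1 = stone2 h from rfl, e2]; exact hb, k1,
      by rw [show (strat h).1 = stone1 h from rfl, show (strat h).2.1 = stone2 h from rfl, e1, e2]; exact hab,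
      k2, k3⟩


variable (p : ℕ → ℤ × ℤ)


def hist (m : ℕ) : List (ℤ × ℤ) := (List.range m).map p

def BlueAt (m : ℕ) (q : ℤ × ℤ) : Prop := ∃ i, i < m ∧ i % 4 = 3 ∧ p i = q
def RedAt (m : ℕ) (q : ℤ × ℤ) : Prop := ∃ i, i < m ∧ i % 4 ≠ 3 ∧ p i = q
def FreeAt (m : ℕ) (q : ℤ × ℤ) : Prop := ∀ i, i < m → p i ≠ q

lemma mem_hist {m : ℕ} {q : ℤ × ℤ} : q ∈ hist p m ↔ ¬ FreeAt p m q := by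
  simp only [hist, List.mem_map, List.mem_range, FreeAt]
  push_neg
  constructor
  · rintro ⟨i, hi, he⟩; exact ⟨i, hi, he⟩
  · rintro ⟨i, hi, he⟩; exact ⟨i, hi, he⟩

lemma get?_hist {m i : ℕ} {q : ℤ × ℤ} :
    (hist p m)[i]? = some q ↔ i < m ∧ p i = q := by
  constructor
  · intro hg
    have hi : i < m := by
      by_contra hge
      simp [hist, hge] at hg
    simp [hist, hi] at hg
    exact ⟨hi, hg⟩
  · rintro ⟨hi, rfl⟩
    simp [hist, hi]

lemma blueSet_hist {m : ℕ} {q : ℤ × ℤ} : q ∈ blueSet (hist p m) ↔ BlueAt p m q := by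
  constructor
  · rintro ⟨i, h4, hg⟩
    obtain ⟨hi, he⟩ := (get?_hist p).1 hg
    exact ⟨i, hi, h4, he⟩
  · rintro ⟨i, hi, h4, he⟩
    exact ⟨i, h4, (get?_hist p).2 ⟨hi, he⟩⟩

lemma getLast_hist {m : ℕ} : (hist p (m + 1)).getLast? = some (p m) := by
  rw [hist, List.range_succ, List.map_append]
  exact List.getLast?_concat


def Inv (m : ℕ) : Prop :=
  (∀ n : ℤ, BlueAt p m (n, n) → RedAt p m (n - 1, n - 1) ∧ RedAt p m (n + 1, n + 1)) ∧
  (∀ n : ℤ, BlueAt p m (n, n + 1) ∨ BlueAt p m (n + 1, n) →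
      ¬ FreeAt p m (n, n) ∧ ¬ FreeAt p m (n + 1, n + 1)) ∧
  (∀ n : ℤ, BlueAt p m (n, n) →
      ((BlueAt p m (n - 1, n) ∨ BlueAt p m (n, n + 1)) →
        RedAt p m (n, n - 1) ∧ RedAt p m (n + 1, n)) ∧
      ((BlueAt p m (n, n - 1) ∨ BlueAt p m (n + 1, n)) →
        RedAt p m (n - 1, n) ∧ RedAt p m (n, n + 1)))

section WithHyp
variable {hp : Function.Injective p}

lemma free_self (hp : Function.Injective p) (i : ℕ) : FreeAt p i (p i) := fun j hj he => by
  have := hp he; omega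

lemma not_red_of_free {m q} (hf : FreeAt p m q) (hr : RedAt p m q) : False := by
  obtain ⟨i, hi, _, he⟩ := hr; exact hf i hi he



lemma not_blue_of_free {m q} (hf : FreeAt p m q) (hb : BlueAt p m q) : False := by
  obtain ⟨i, hi, _, he⟩ := hb; exact hf i hi he

lemma clash (hp : Function.Injective p) {m m' q} (hb : BlueAt p m q) (hr : RedAt p m' q) : False := by
  obtain ⟨i, hi, h4, he⟩ := hb
  obtain ⟨j, hj, h4', he'⟩ := hr
  have : i = j := hp (he.trans he'.symm)
  omega

lemma blue_mono {m m' q} (h : m ≤ m') (hb : BlueAt p m q) : BlueAt p m' q := by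
  obtain ⟨i, hi, h4, he⟩ := hb; exact ⟨i, by omega, h4, he⟩

lemma red_mono {m m' q} (h : m ≤ m') (hb : RedAt p m q) : RedAt p m' q := by
  obtain ⟨i, hi, h4, he⟩ := hb; exact ⟨i, by omega, h4, he⟩

lemma notfree_mono {m m' q} (h : m ≤ m') (hb : ¬ FreeAt p m q) : ¬ FreeAt p m' q := by
  intro hf; exact hb (fun i hi => hf i (by omega))

lemma notfree_of_red (hp : Function.Injective p) {m q} (hr : RedAt p m q) : ¬ FreeAt p m q := by
  intro hf; exact not_red_of_free p hf hr

lemma notfree_of_blue (hp : Function.Injective p) {m q} (hb : BlueAt p m q) : ¬ FreeAt p m q := by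
  intro hf; exact not_blue_of_free p hf hb

lemma claimed_split {m q} (h : ¬ FreeAt p m q) : BlueAt p m q ∨ RedAt p m q := by
  unfold FreeAt at h
  push_neg at h
  obtain ⟨i, hi, he⟩ := h
  by_cases h4 : i % 4 = 3
  · exact Or.inl ⟨i, hi, h4, he⟩
  · exact Or.inr ⟨i, hi, h4, he⟩

lemma blue_window {t s : ℕ} (hs : s ≤ 3) {q : ℤ × ℤ} :
    BlueAt p (4 * t + 4 + s) q ↔ BlueAt p (4 * t + 3) q ∨ p (4 * t + 3) = q := by
  constructor
  · rintro ⟨i, hi, h4, he⟩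
    by_cases hlt : i < 4 * t + 3
    · exact Or.inl ⟨i, hlt, h4, he⟩
    · have : i = 4 * t + 3 := by omega
      exact Or.inr (this ▸ he)
  · rintro (⟨i, hi, h4, he⟩ | he)
    · exact ⟨i, by omega, h4, he⟩
    · exact ⟨4 * t + 3, by omega, by omega, he⟩

lemma respList_hist_eq (m : ℕ) :
    respList (hist p (m + 1)) = respCore (blueSet (hist p (m + 1))) (p m) := by
  rw [respList, getLast_hist]

lemma resp_red
    (hs : ∀ k : ℕ, p (4 * k) = stone1 (hist p (4 * k)) ∧
      p (4 * k + 1) = stone2 (hist p (4 * k)) ∧ p (4 * k + 2) = stone3 (hist p (4 * k)))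
    {t : ℕ} {q : ℤ × ℤ} (hq : q ∈ respList (hist p (4 * t + 4)))
    (hf : FreeAt p (4 * t + 4) q) : RedAt p (4 * t + 7) q := by
  have hnm : q ∉ hist p (4 * t + 4) := by
    rw [mem_hist]; exact fun h => h hf
  have h44 : 4 * t + 4 = 4 * (t + 1) := by ring
  rcases strat_cover hq hnm with he | he
  · refine ⟨4 * t + 4, by omega, by omega, ?_⟩
    rw [show (4:ℕ) * t + 4 = 4 * (t+1) by ring, (hs (t+1)).1]
    rw [← h44]; exact he.symm
  · refine ⟨4 * t + 5, by omega, by omega, ?_⟩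
    rw [show (4:ℕ) * t + 5 = 4 * (t+1) + 1 by ring, (hs (t+1)).2.1]
    rw [← h44]; exact he.symm

lemma target_red
    (hs : ∀ k : ℕ, p (4 * k) = stone1 (hist p (4 * k)) ∧
      p (4 * k + 1) = stone2 (hist p (4 * k)) ∧ p (4 * k + 2) = stone3 (hist p (4 * k)))
    {t : ℕ} {q : ℤ × ℤ} (hq : q ∈ respList (hist p (4 * t + 4)))
    (hnb : ¬ BlueAt p (4 * t + 4) q) : RedAt p (4 * t + 7) q := by
  by_cases hf : FreeAt p (4 * t + 4) q
  · exact resp_red p hs hq hf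
  · rcases claimed_split p hf with hb | hr
    · exact absurd hb hnb
    · exact red_mono p (by omega) hr

lemma inv_step (hp : Function.Injective p)
    (hs : ∀ k : ℕ, p (4 * k) = stone1 (hist p (4 * k)) ∧
      p (4 * k + 1) = stone2 (hist p (4 * k)) ∧ p (4 * k + 2) = stone3 (hist p (4 * k)))
    {t : ℕ} (old : Inv p (4 * t + 3)) : Inv p (4 * t + 7) := by
  obtain ⟨oa, ob, oc⟩ := old
  have hfz : FreeAt p (4 * t + 3) (p (4 * t + 3)) := free_self p hp _
  have hb1 : ∀ q, BlueAt p (4 * t + 4) q ↔ BlueAt p (4 * t + 3) q ∨ p (4 * t + 3) = q :=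
    fun q => by simpa using blue_window p (t := t) (s := 0) (by omega) (q := q)
  have hb2 : ∀ q, BlueAt p (4 * t + 7) q ↔ BlueAt p (4 * t + 3) q ∨ p (4 * t + 3) = q :=
    fun q => by simpa using blue_window p (t := t) (s := 3) (by omega) (q := q)
  have pairne : ∀ a b c d : ℤ, (a, b) = (c, d) → a = c ∧ b = d := by
    intro a b c d h; simpa [Prod.ext_iff] using h
  refine ⟨?_, ?_, ?_⟩
  · -- clause (a)
    intro n hbn
    rcases (hb2 _).1 hbn with hold | hnew
    · exact ⟨red_mono p (by omega) (oa n hold).1, red_mono p (by omega) (oa n hold).2⟩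
    · have hresp : respList (hist p (4 * t + 4)) = [(n - 1, n - 1), (n + 1, n + 1)] := by
        rw [respList_hist_eq, hnew, show (4*t+3+1:ℕ) = 4*t+4 from by omega]
        simp [respCore]
      have hfznn : FreeAt p (4 * t + 3) (n, n) := hnew ▸ hfz
      constructor
      · refine target_red p hs (by rw [hresp]; simp) ?_
        intro hbcap
        rcases (hb1 _).1 hbcap with hold' | heq
        · have h2 := (oa (n - 1) hold').2
          rw [show (n:ℤ) - 1 + 1 = n by ring] at h2
          exact not_red_of_free p hfznn h2
        · have := (pairne _ _ _ _ (hnew.symm.trans heq)).1; omega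
      · refine target_red p hs (by rw [hresp]; simp) ?_
        intro hbcap
        rcases (hb1 _).1 hbcap with hold' | heq
        · have h2 := (oa (n + 1) hold').1
          rw [show (n:ℤ) + 1 - 1 = n by ring] at h2
          exact not_red_of_free p hfznn h2
        · have := (pairne _ _ _ _ (hnew.symm.trans heq)).1; omega
  · -- clause (b)
    intro n hb
    have main : ∀ zval : ℤ × ℤ, p (4 * t + 3) = zval →
        (zval = (n, n + 1) ∨ zval = (n + 1, n)) →
        ¬FreeAt p (4 * t + 7) (n, n) ∧ ¬FreeAt p (4 * t + 7) (n + 1, n + 1) := by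
      intro zval hnew hcase
      by_cases hd1 : BlueAt p (4 * t + 4) (n, n)
      · have hold1 : BlueAt p (4 * t + 3) (n, n) := by
          rcases (hb1 _).1 hd1 with h | h
          · exact h
          · exfalso
            rw [hnew] at h
            rcases hcase with rfl | rfl
            · have := (pairne _ _ _ _ h).2; omega
            · have := (pairne _ _ _ _ h).1; omega
        refine ⟨notfree_mono p (by omega) (notfree_of_blue p hp hold1), ?_⟩
        exact notfree_mono p (by omega) (notfree_of_red p hp (oa n hold1).2)
      · by_cases hd2 : BlueAt p (4 * t + 4) (n + 1, n + 1)
        · have hold2 : BlueAt p (4 * t + 3) (n + 1, n + 1) := by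
            rcases (hb1 _).1 hd2 with h | h
            · exact h
            · exfalso
              rw [hnew] at h
              rcases hcase with rfl | rfl
              · have := (pairne _ _ _ _ h).1; omega
              · have := (pairne _ _ _ _ h).2; omega
          have h2 := (oa (n + 1) hold2).1
          rw [show (n:ℤ) + 1 - 1 = n by ring] at h2
          exact ⟨notfree_mono p (by omega) (notfree_of_red p hp h2),
            notfree_mono p (by omega) (notfree_of_blue p hp hold2)⟩
        · have hresp : respList (hist p (4 * t + 4)) = [(n, n), (n + 1, n + 1)] := by
            have hn1 : (n, n) ∉ blueSet (hist p (4*t+4)) :=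
              fun hc => hd1 ((blueSet_hist p).1 hc)
            have hn2 : (n+1, n+1) ∉ blueSet (hist p (4*t+4)) :=
              fun hc => hd2 ((blueSet_hist p).1 hc)
            rw [respList_hist_eq, hnew, show (4*t+3+1:ℕ) = 4*t+4 from by omega]
            rcases hcase with rfl | rfl
            · simp [respCore, hn1, hn2, show ¬((n:ℤ) + 1 = n) by omega]
            · simp [respCore, hn1, hn2, show ¬((n:ℤ) = n + 1) by omega,
                show ¬((n:ℤ) = n + 1 + 1) by omega]
          constructor
          · exact notfree_of_red p hp (target_red p hs (by rw [hresp]; simp) hd1)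
          · exact notfree_of_red p hp (target_red p hs (by rw [hresp]; simp) hd2)
    rcases hb with hbu | hbd
    · rcases (hb2 _).1 hbu with hold | hnew
      · have h2 := ob n (Or.inl hold)
        exact ⟨notfree_mono p (by omega) h2.1, notfree_mono p (by omega) h2.2⟩
      · exact main _ hnew (Or.inl rfl)
    · rcases (hb2 _).1 hbd with hold | hnew
      · have h2 := ob n (Or.inr hold)
        exact ⟨notfree_mono p (by omega) h2.1, notfree_mono p (by omega) h2.2⟩
      · exact main _ hnew (Or.inr rfl)
  · -- clause (c)
    intro n hbn
    constructor
    · -- blue up-rail ⇒ red down-rails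
      intro hbu
      rcases (hb2 _).1 hbn with holdn | hnewn
      · -- (n,n) old blue
        rcases hbu with hbu | hbu <;> rcases (hb2 _).1 hbu with holdu | hnewu
        · exact ⟨red_mono p (by omega) ((oc n holdn).1 (Or.inl holdu)).1,
            red_mono p (by omega) ((oc n holdn).1 (Or.inl holdu)).2⟩
        · -- z = (n-1, n)
          have hfzu : FreeAt p (4 * t + 3) (n - 1, n) := hnewu ▸ hfz
          have hnb1 : ¬ BlueAt p (4 * t + 4) (n - 1, n - 1) := by
            intro hbc
            rcases (hb1 _).1 hbc with h | h
            · exact clash p hp h (oa n holdn).1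
            · have h2 := pairne _ _ _ _ (hnewu.symm.trans h); omega
          have hresp : respList (hist p (4 * t + 4)) = [(n, n - 1), (n + 1, n)] := by
            have hn1 : (n - 1, n - 1) ∉ blueSet (hist p (4*t+4)) :=
              fun hc => hnb1 ((blueSet_hist p).1 hc)
            have hmem : (n, n) ∈ blueSet (hist p (4*t+4)) :=
              (blueSet_hist p).2 (blue_mono p (by omega) holdn)
            rw [respList_hist_eq, hnewu, show (4*t+3+1:ℕ) = 4*t+4 from by omega]
            simp [respCore, hn1, hmem, show ((n:ℤ) - 1 + 1 = n) by ring,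
              show ¬((n:ℤ) = n - 1) by omega]
          constructor
          · refine target_red p hs (by rw [hresp]; simp) ?_
            intro hbc
            rcases (hb1 _).1 hbc with h | h
            · exact not_red_of_free p hfzu ((oc n holdn).2 (Or.inl h)).1
            · have h2 := pairne _ _ _ _ (hnewu.symm.trans h); omega
          · refine target_red p hs (by rw [hresp]; simp) ?_
            intro hbc
            rcases (hb1 _).1 hbc with h | h
            · exact not_red_of_free p hfzu ((oc n holdn).2 (Or.inr h)).1
            · have h2 := pairne _ _ _ _ (hnewu.symm.trans h); omega
        · exact ⟨red_mono p (by omega) ((oc n holdn).1 (Or.inr holdu)).1,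
            red_mono p (by omega) ((oc n holdn).1 (Or.inr holdu)).2⟩
        · -- z = (n, n+1)
          have hfzu : FreeAt p (4 * t + 3) (n, n + 1) := hnewu ▸ hfz
          have hresp : respList (hist p (4 * t + 4)) = [(n, n - 1), (n + 1, n)] := by
            have hmem : (n, n) ∈ blueSet (hist p (4*t+4)) :=
              (blueSet_hist p).2 (blue_mono p (by omega) holdn)
            rw [respList_hist_eq, hnewu, show (4*t+3+1:ℕ) = 4*t+4 from by omega]
            simp [respCore, hmem, show ¬((n:ℤ) + 1 = n) by omega]
          constructor
          · refine target_red p hs (by rw [hresp]; simp) ?_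
            intro hbc
            rcases (hb1 _).1 hbc with h | h
            · exact not_red_of_free p hfzu ((oc n holdn).2 (Or.inl h)).2
            · have h2 := pairne _ _ _ _ (hnewu.symm.trans h); omega
          · refine target_red p hs (by rw [hresp]; simp) ?_
            intro hbc
            rcases (hb1 _).1 hbc with h | h
            · exact not_red_of_free p hfzu ((oc n holdn).2 (Or.inr h)).2
            · have h2 := pairne _ _ _ _ (hnewu.symm.trans h); omega
      · -- (n,n) new: up-rail must be old, contradiction via (b)
        exfalso
        have hfznn : FreeAt p (4 * t + 3) (n, n) := hnewn ▸ hfz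
        rcases hbu with hbu | hbu <;> rcases (hb2 _).1 hbu with holdu | hnewu
        · exact (ob (n - 1) (Or.inl (by rw [show (n:ℤ) - 1 + 1 = n by ring]; exact holdu))).2
            (by rw [show (n:ℤ) - 1 + 1 = n by ring]; exact hfznn)
        · have h2 := pairne _ _ _ _ (hnewn.symm.trans hnewu); omega
        · exact (ob n (Or.inl holdu)).1 hfznn
        · have h2 := pairne _ _ _ _ (hnewn.symm.trans hnewu); omega
    · -- blue down-rail ⇒ red up-rails
      intro hbd
      rcases (hb2 _).1 hbn with holdn | hnewn
      · rcases hbd with hbd | hbd <;> rcases (hb2 _).1 hbd with holdd | hnewd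
        · exact ⟨red_mono p (by omega) ((oc n holdn).2 (Or.inl holdd)).1,
            red_mono p (by omega) ((oc n holdn).2 (Or.inl holdd)).2⟩
        · -- z = (n, n-1)
          have hfzd : FreeAt p (4 * t + 3) (n, n - 1) := hnewd ▸ hfz
          have hnb1 : ¬ BlueAt p (4 * t + 4) (n - 1, n - 1) := by
            intro hbc
            rcases (hb1 _).1 hbc with h | h
            · exact clash p hp h (oa n holdn).1
            · have h2 := pairne _ _ _ _ (hnewd.symm.trans h); omega
          have hresp : respList (hist p (4 * t + 4)) = [(n - 1, n), (n, n + 1)] := by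
            have hn1 : (n - 1, n - 1) ∉ blueSet (hist p (4*t+4)) :=
              fun hc => hnb1 ((blueSet_hist p).1 hc)
            have hmem : (n, n) ∈ blueSet (hist p (4*t+4)) :=
              (blueSet_hist p).2 (blue_mono p (by omega) holdn)
            rw [respList_hist_eq, hnewd, show (4*t+3+1:ℕ) = 4*t+4 from by omega]
            simp [respCore, hn1, hmem, show ((n:ℤ) - 1 + 1 = n) by ring,
              show ¬((n:ℤ) - 1 = n) by omega, show ¬((n:ℤ) - 1 = n + 1) by omega]
          constructor
          · refine target_red p hs (by rw [hresp]; simp) ?_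
            intro hbc
            rcases (hb1 _).1 hbc with h | h
            · exact not_red_of_free p hfzd ((oc n holdn).1 (Or.inl h)).1
            · have h2 := pairne _ _ _ _ (hnewd.symm.trans h); omega
          · refine target_red p hs (by rw [hresp]; simp) ?_
            intro hbc
            rcases (hb1 _).1 hbc with h | h
            · exact not_red_of_free p hfzd ((oc n holdn).1 (Or.inr h)).1
            · have h2 := pairne _ _ _ _ (hnewd.symm.trans h); omega
        · exact ⟨red_mono p (by omega) ((oc n holdn).2 (Or.inr holdd)).1,
            red_mono p (by omega) ((oc n holdn).2 (Or.inr holdd)).2⟩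
        · -- z = (n+1, n)
          have hfzd : FreeAt p (4 * t + 3) (n + 1, n) := hnewd ▸ hfz
          have hresp : respList (hist p (4 * t + 4)) = [(n - 1, n), (n, n + 1)] := by
            have hmem : (n, n) ∈ blueSet (hist p (4*t+4)) :=
              (blueSet_hist p).2 (blue_mono p (by omega) holdn)
            rw [respList_hist_eq, hnewd, show (4*t+3+1:ℕ) = 4*t+4 from by omega]
            simp [respCore, hmem, show ¬((n:ℤ) = n + 1) by omega,
              show ¬((n:ℤ) = n + 1 + 1) by omega]
          constructor
          · refine target_red p hs (by rw [hresp]; simp) ?_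
            intro hbc
            rcases (hb1 _).1 hbc with h | h
            · exact not_red_of_free p hfzd ((oc n holdn).1 (Or.inl h)).2
            · have h2 := pairne _ _ _ _ (hnewd.symm.trans h); omega
          · refine target_red p hs (by rw [hresp]; simp) ?_
            intro hbc
            rcases (hb1 _).1 hbc with h | h
            · exact not_red_of_free p hfzd ((oc n holdn).1 (Or.inr h)).2
            · have h2 := pairne _ _ _ _ (hnewd.symm.trans h); omega
      · exfalso
        have hfznn : FreeAt p (4 * t + 3) (n, n) := hnewn ▸ hfz
        rcases hbd with hbd | hbd <;> rcases (hb2 _).1 hbd with holdd | hnewd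
        · exact (ob (n - 1) (Or.inr (by
            rw [show (n:ℤ) - 1 + 1 = n by ring]; exact holdd))).2
            (by rw [show (n:ℤ) - 1 + 1 = n by ring]; exact hfznn)
        · have h2 := pairne _ _ _ _ (hnewn.symm.trans hnewd); omega
        · exact (ob n (Or.inr holdd)).1 hfznn
        · have h2 := pairne _ _ _ _ (hnewn.symm.trans hnewd); omega


lemma inv_base : Inv p 3 := by
  have hnb : ∀ q : ℤ × ℤ, ¬ BlueAt p 3 q := by
    rintro q ⟨i, hi, h4, _⟩; omega
  refine ⟨fun n hb => absurd hb (hnb _), fun n hb => ?_, fun n hb => absurd hb (hnb _)⟩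
  rcases hb with hb | hb <;> exact absurd hb (hnb _)

lemma inv_all (hp : Function.Injective p)
    (hs : ∀ k : ℕ, p (4 * k) = stone1 (hist p (4 * k)) ∧
      p (4 * k + 1) = stone2 (hist p (4 * k)) ∧ p (4 * k + 2) = stone3 (hist p (4 * k)))
    (t : ℕ) : Inv p (4 * t + 3) := by
  induction t with
  | zero => exact inv_base p
  | succ m ih =>
    have he : 4 * (m + 1) + 3 = 4 * m + 7 := by ring
    rw [he]
    exact inv_step p hp hs ih

lemma band_played (hs : ∀ k : ℕ, p (4 * k) = stone1 (hist p (4 * k)) ∧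
      p (4 * k + 1) = stone2 (hist p (4 * k)) ∧ p (4 * k + 2) = stone3 (hist p (4 * k)))
    (k : ℕ) : ∃ i : ℕ, p i = eBand k := by
  induction k using Nat.strong_induction_on with
  | _ k ih =>
    by_contra hc
    push_neg at hc
    have haux : ∀ k' : ℕ, (∀ j, j < k' → ∃ i : ℕ, p i = eBand j) →
        ∃ M : ℕ, ∀ j : ℕ, j < k' → ∃ i : ℕ, i < M ∧ p i = eBand j := by
      intro k'
      induction k' with
      | zero => exact fun _ => ⟨0, by omega⟩
      | succ m ihm =>
        intro hw
        obtain ⟨M, hM⟩ := ihm (fun j hj => hw j (by omega))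
        obtain ⟨i, hi⟩ := hw m (by omega)
        refine ⟨max M (i + 1), fun j hj => ?_⟩
        rcases Nat.lt_succ_iff_lt_or_eq.1 hj with hj' | rfl
        · obtain ⟨i', hi1, hi2⟩ := hM j hj'
          exact ⟨i', by omega, hi2⟩
        · exact ⟨i, by omega, hi⟩
    obtain ⟨M, hM⟩ := haux k (fun j hj => ih j hj)
    set h := hist p (4 * M) with hh
    have ht3 : p (4 * M + 2) = stone3 h := (hs M).2.2
    have hlist : ∀ j : ℕ, j < k → eBand j ∈ (stone2 h :: stone1 h :: h) := by
      intro j hj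
      obtain ⟨i, hi1, hi2⟩ := hM j hj
      have hmm : eBand j ∈ h := by
        rw [hh, mem_hist]
        intro hf
        exact hf i (by omega) hi2
      simp [hmm]
    have hnotin : eBand k ∉ (stone2 h :: stone1 h :: h) := by
      intro hmem
      simp only [List.mem_cons] at hmem
      rcases hmem with he | he | he
      · exact hc (4 * M + 1) (by rw [(hs M).2.1]; exact he.symm)
      · exact hc (4 * M) (by rw [(hs M).1]; exact he.symm)
      · rw [hh, mem_hist] at he
        unfold FreeAt at he
        push_neg at he
        obtain ⟨i, _, hpe⟩ := he
        exact hc i hpe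
    have hfind_le : Nat.find (exists_fill (stone2 h :: stone1 h :: h)) ≤ k :=
      Nat.find_le hnotin
    have hfind_ge : k ≤ Nat.find (exists_fill (stone2 h :: stone1 h :: h)) := by
      by_contra hlt
      push_neg at hlt
      exact (Nat.find_spec (exists_fill (stone2 h :: stone1 h :: h))) (hlist _ hlt)
    have hfk : stone3 h = eBand k := by
      rw [stone3, fill]
      congr 1
      omega
    exact hc (4 * M + 2) (by rw [ht3, hfk])

end WithHyp

variable (U : Set ℤ)

open Finset in
def Sfun (n : ℤ) : ℤ :=
  haveI := Classical.decPred (· ∈ U)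
  if 0 ≤ n then n + ((Finset.Ico (0:ℤ) n).filter (· ∈ U)).card
  else n - ((Finset.Ico n (0:ℤ)).filter (· ∈ U)).card

lemma Sfun_zero : Sfun U 0 = 0 := by simp [Sfun]

lemma Sfun_succ (n : ℤ) :
    Sfun U (n + 1) = Sfun U n + (if n ∈ U then 2 else 1) := by
  classical
  unfold Sfun
  rcases le_or_gt 0 n with hn | hn
  · rw [if_pos hn, if_pos (by omega)]
    have h1 : Finset.Ico (0:ℤ) (n+1) = insert n (Finset.Ico (0:ℤ) n) := by
      ext x; simp [Finset.mem_Ico]; omega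
    rw [h1, Finset.filter_insert]
    by_cases hU : n ∈ U
    · rw [if_pos hU, Finset.card_insert_of_notMem (by simp), if_pos hU]
      push_cast
      ring
    · rw [if_neg hU, if_neg hU]
      ring
  · rcases eq_or_lt_of_le (show n + 1 ≤ 0 by omega) with he | hlt
    · -- n = -1
      have hn1 : n = -1 := by omega
      subst hn1
      rw [if_pos (by omega : (0:ℤ) ≤ -1 + 1), if_neg (by omega : ¬ (0:ℤ) ≤ -1)]
      have h1 : Finset.Ico (-1:ℤ) 0 = {-1} := by
        ext x; simp [Finset.mem_Ico]; omega
      rw [h1]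
      by_cases hU : (-1:ℤ) ∈ U <;> simp [hU, Finset.filter_singleton]
    · rw [if_neg (by omega), if_neg (by omega)]
      have h1 : Finset.Ico n (0:ℤ) = insert n (Finset.Ico (n+1) (0:ℤ)) := by
        ext x; simp [Finset.mem_Ico]; omega
      rw [h1, Finset.filter_insert]
      by_cases hU : n ∈ U
      · rw [if_pos hU, Finset.card_insert_of_notMem (by simp), if_pos hU]
        push_cast
        ring
      · rw [if_neg hU, if_neg hU]
        ring

lemma Sfun_succ_ge (n : ℤ) : Sfun U n + 1 ≤ Sfun U (n + 1) := by
  rw [Sfun_succ]; split_ifs <;> omega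

lemma Sfun_mono : StrictMono (Sfun U) := by
  apply strictMono_int_of_lt_succ
  intro n
  have := Sfun_succ_ge U n
  omega

lemma Sfun_bound_pos : ∀ n : ℤ, 0 ≤ n → n ≤ Sfun U n ∧ Sfun U n ≤ 2 * n := by
  intro n hn
  refine Int.le_induction (motive := fun n _ => n ≤ Sfun U n ∧ Sfun U n ≤ 2 * n) (m := 0) ?_ ?_ n hn
  · simp [Sfun_zero]
  · intro m hm ih
    have h := Sfun_succ U m
    split_ifs at h <;> omega

lemma Sfun_bound_neg : ∀ n : ℤ, n ≤ 0 → 2 * n ≤ Sfun U n ∧ Sfun U n ≤ n := by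
  intro n hn
  refine Int.le_induction_down (motive := fun n _ => 2 * n ≤ Sfun U n ∧ Sfun U n ≤ n) (m := 0) ?_ ?_ n hn
  · simp [Sfun_zero]
  · intro m hm ih
    have h := Sfun_succ U (m - 1)
    rw [show (m:ℤ) - 1 + 1 = m by ring] at h
    split_ifs at h <;> omega

lemma exists_Nk (k : ℤ) : ∃ n : ℤ, (Sfun U n ≤ k ∧ k < Sfun U (n + 1)) := by
  have hbd : ∀ z : ℤ, Sfun U z ≤ k → z ≤ k.natAbs := by
    intro z hz
    by_contra hc
    push_neg at hc
    have hz0 : 0 ≤ z := by omega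
    have := (Sfun_bound_pos U z hz0).1
    omega
  have hne : Sfun U (-(k.natAbs : ℤ) - 1) ≤ k := by
    have h0 : (-(k.natAbs : ℤ) - 1) ≤ 0 := by omega
    have := (Sfun_bound_neg U _ h0).2
    omega
  obtain ⟨n, hn1, hn2⟩ := Int.exists_greatest_of_bdd
    ⟨(k.natAbs : ℤ), hbd⟩ ⟨-(k.natAbs : ℤ) - 1, hne⟩
  refine ⟨n, hn1, ?_⟩
  by_contra hc
  push_neg at hc
  have := hn2 (n + 1) hc
  omega

def Nk (k : ℤ) : ℤ := Classical.choose (exists_Nk U k)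

lemma Nk_spec (k : ℤ) : Sfun U (Nk U k) ≤ k ∧ k < Sfun U (Nk U k + 1) :=
  Classical.choose_spec (exists_Nk U k)

lemma Nk_unique {k n : ℤ} (h1 : Sfun U n ≤ k) (h2 : k < Sfun U (n + 1)) : Nk U k = n := by
  obtain ⟨g1, g2⟩ := Nk_spec U k
  by_contra hne
  rcases lt_or_gt_of_ne hne with hlt | hgt
  · have : Nk U k + 1 ≤ n := by omega
    have := (Sfun_mono U).monotone this
    omega
  · have : n + 1 ≤ Nk U k := by omega
    have := (Sfun_mono U).monotone this
    omega

def cf (d1 d2 : ℤ → ℤ × ℤ) (k : ℤ) : ℤ × ℤ :=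
  haveI := Classical.decPred (· ∈ U)
  if Nk U k ∈ U then (if k = Sfun U (Nk U k) then d1 (Nk U k) else d2 (Nk U k))
  else (Nk U k, Nk U k)

lemma hex_diag (n : ℤ) : HexAdj (n, n) (n + 1, n + 1) := by
  simp [HexAdj, Prod.ext_iff]

lemma chain_exists (c : ℤ × ℤ → Option Bool) (d1 d2 : ℤ → ℤ × ℤ)
    (hU1 : ∀ n : ℤ, n ∉ U → c (n, n) = some true)
    (hU2 : ∀ n : ℤ, n ∈ U → (n + 1) ∉ U)
    (hd : ∀ n ∈ U, c (d1 n) = some true ∧ c (d2 n) = some true ∧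
      HexAdj (n - 1, n - 1) (d1 n) ∧ HexAdj (d1 n) (d2 n) ∧ HexAdj (d2 n) (n + 1, n + 1) ∧
      ((d1 n).1 ≤ n + 1 ∧ n - 1 ≤ (d1 n).1) ∧ ((d1 n).2 ≤ n + 1 ∧ n - 1 ≤ (d1 n).2) ∧
      ((d2 n).1 ≤ n + 1 ∧ n - 1 ≤ (d2 n).1) ∧ ((d2 n).2 ≤ n + 1 ∧ n - 1 ≤ (d2 n).2)) :
    RedWinsStd c := by
  classical
  have bounds : ∀ k : ℤ, (Nk U k - 1 ≤ (cf U d1 d2 k).1 ∧ (cf U d1 d2 k).1 ≤ Nk U k + 1) ∧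
      (Nk U k - 1 ≤ (cf U d1 d2 k).2 ∧ (cf U d1 d2 k).2 ≤ Nk U k + 1) := by
    intro k
    unfold cf
    by_cases hU : Nk U k ∈ U
    · rw [if_pos hU]
      obtain ⟨_, _, _, _, _, b1, b2, b3, b4⟩ := hd _ hU
      by_cases hk : k = Sfun U (Nk U k)
      · rw [if_pos hk]; exact ⟨⟨b1.2, b1.1⟩, ⟨b2.2, b2.1⟩⟩
      · rw [if_neg hk]; exact ⟨⟨b3.2, b3.1⟩, ⟨b4.2, b4.1⟩⟩
    · rw [if_neg hU]; constructor <;> constructor <;> simp <;> omega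
  refine ⟨cf U d1 d2, ?_, ?_⟩
  · -- IsRedChain
    intro k
    obtain ⟨h1, h2⟩ := Nk_spec U k
    by_cases hU : Nk U k ∈ U
    · have hS : Sfun U (Nk U k + 1) = Sfun U (Nk U k) + 2 := by
        rw [Sfun_succ, if_pos hU]
      by_cases hk : k = Sfun U (Nk U k)
      · have hfk : cf U d1 d2 k = d1 (Nk U k) := by
          unfold cf; rw [if_pos hU, if_pos hk]
        have hN1 : Nk U (k + 1) = Nk U k := Nk_unique U (by omega) (by omega)
        have hfk1 : cf U d1 d2 (k + 1) = d2 (Nk U k) := by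
          unfold cf; rw [hN1, if_pos hU, if_neg (by omega)]
        rw [hfk, hfk1]
        exact ⟨(hd _ hU).2.2.2.1, (hd _ hU).1⟩
      · have hk2 : k = Sfun U (Nk U k) + 1 := by omega
        have hfk : cf U d1 d2 k = d2 (Nk U k) := by
          unfold cf; rw [if_pos hU, if_neg hk]
        have hge := Sfun_succ_ge U (Nk U k + 1)
        have hN1 : Nk U (k + 1) = Nk U k + 1 := Nk_unique U (by omega) (by omega)
        have hU' : Nk U k + 1 ∉ U := hU2 _ hU
        have hfk1 : cf U d1 d2 (k + 1) = (Nk U k + 1, Nk U k + 1) := by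
          unfold cf; rw [hN1, if_neg hU']
        rw [hfk, hfk1]
        exact ⟨(hd _ hU).2.2.2.2.1, (hd _ hU).2.1⟩
    · have hS : Sfun U (Nk U k + 1) = Sfun U (Nk U k) + 1 := by
        rw [Sfun_succ, if_neg hU]
      have hk : k = Sfun U (Nk U k) := by omega
      have hfk : cf U d1 d2 k = (Nk U k, Nk U k) := by
        unfold cf; rw [if_neg hU]
      have hge := Sfun_succ_ge U (Nk U k + 1)
      have hN1 : Nk U (k + 1) = Nk U k + 1 := Nk_unique U (by omega) (by omega)
      by_cases hU' : Nk U k + 1 ∈ U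
      · have hfk1 : cf U d1 d2 (k + 1) = d1 (Nk U k + 1) := by
          unfold cf; rw [hN1, if_pos hU', if_pos (by omega)]
        rw [hfk, hfk1]
        have hadj := (hd _ hU').2.2.1
        rw [show (Nk U k + 1 - 1 : ℤ) = Nk U k by ring] at hadj
        exact ⟨hadj, hU1 _ hU⟩
      · have hfk1 : cf U d1 d2 (k + 1) = (Nk U k + 1, Nk U k + 1) := by
          unfold cf; rw [hN1, if_neg hU']
        rw [hfk, hfk1]
        exact ⟨hex_diag _, hU1 _ hU⟩
  · -- RedConverges
    intro a b
    refine ⟨((2 * (max a b) + 8).toNat + (8 - 2 * (min a b)).toNat + 8), ?_⟩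
    intro n hn
    have hta : (2 * (max a b) + 8 : ℤ) ≤ ((2 * (max a b) + 8).toNat : ℤ) := Int.self_le_toNat _
    have htb : (8 - 2 * (min a b) : ℤ) ≤ (((8 - 2 * (min a b)).toNat : ℤ)) := Int.self_le_toNat _
    have hcast : ((2 * (max a b) + 8).toNat + (8 - 2 * (min a b)).toNat + 8 : ℤ) ≤ (n : ℤ) := by
      exact_mod_cast Nat.cast_le.mpr hn
    have hmaxa : a ≤ max a b := le_max_left _ _
    have hmaxb : b ≤ max a b := le_max_right _ _
    have hmina : min a b ≤ a := min_le_left _ _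
    have hminb : min a b ≤ b := min_le_right _ _
    have hn0 : (0 : ℤ) ≤ (n : ℤ) := Int.ofNat_nonneg n
    obtain ⟨hp1, hp2⟩ := Nk_spec U ((n : ℕ) : ℤ)
    obtain ⟨hq1, hq2⟩ := Nk_spec U (-(n : ℤ))
    obtain ⟨⟨pb1, pb2⟩, pb3, pb4⟩ := bounds ((n : ℕ) : ℤ)
    obtain ⟨⟨qb1, qb2⟩, qb3, qb4⟩ := bounds (-(n : ℤ))
    have hApos : 0 ≤ Nk U ((n : ℕ) : ℤ) + 1 := by
      by_contra hcon
      push_neg at hcon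
      have := (Sfun_bound_neg U (Nk U ((n : ℕ) : ℤ) + 1) (by omega)).2
      omega
    have h2p := (Sfun_bound_pos U (Nk U ((n : ℕ) : ℤ) + 1) hApos).2
    have hqneg : Nk U (-(n : ℤ)) ≤ 0 := by
      by_contra hcon
      push_neg at hcon
      have := (Sfun_bound_pos U (Nk U (-(n : ℤ))) (by omega)).1
      omega
    have h2q := (Sfun_bound_neg U (Nk U (-(n : ℤ))) hqneg).1
    exact ⟨by omega, by omega, by omega, by omega⟩

lemma hexAdj_cases {u v : ℤ × ℤ}
    (h : (v.1 - u.1 = 1 ∧ v.2 - u.2 = 0) ∨ (v.1 - u.1 = -1 ∧ v.2 - u.2 = 0) ∨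
         (v.1 - u.1 = 0 ∧ v.2 - u.2 = 1) ∨ (v.1 - u.1 = 0 ∧ v.2 - u.2 = -1) ∨
         (v.1 - u.1 = 1 ∧ v.2 - u.2 = 1) ∨ (v.1 - u.1 = -1 ∧ v.2 - u.2 = -1)) :
    HexAdj u v := by
  have hvu : v - u = (v.1 - u.1, v.2 - u.2) := rfl
  unfold HexAdj
  rw [hvu]
  rcases h with ⟨h1, h2⟩ | ⟨h1, h2⟩ | ⟨h1, h2⟩ | ⟨h1, h2⟩ | ⟨h1, h2⟩ | ⟨h1, h2⟩ <;>
    rw [h1, h2] <;> simp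

end

end ThreeForOne

/-- In the 3-for-1 variation of infinite Hex (on each round Red places three stones on
distinct empty cells, then Blue places one stone on an empty cell), Red has a winning
strategy: a strategy `σ`, choosing Red's three cells as a function of the finite history
of all stones placed so far, such that in every infinite play consistent with it Red
fulfills the standard winning condition in the resulting coloring. -/
theorem three_for_one_infinite_hex_red_wins :
    ∃ σ : List (ℤ × ℤ) → (ℤ × ℤ) × (ℤ × ℤ) × (ℤ × ℤ),
      (∀ h : List (ℤ × ℤ),
        (σ h).1 ∉ h ∧ (σ h).2.1 ∉ h ∧ (σ h).2.2 ∉ h ∧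
        (σ h).1 ≠ (σ h).2.1 ∧ (σ h).1 ≠ (σ h).2.2 ∧ (σ h).2.1 ≠ (σ h).2.2) ∧
      ∀ p : ℕ → ℤ × ℤ, Function.Injective p →
        (∀ k : ℕ,
          p (4 * k) = (σ ((List.range (4 * k)).map p)).1 ∧
          p (4 * k + 1) = (σ ((List.range (4 * k)).map p)).2.1 ∧
          p (4 * k + 2) = (σ ((List.range (4 * k)).map p)).2.2) →
        ∀ c : ℤ × ℤ → Option Bool,
          (∀ i : ℕ, i % 4 ≠ 3 → c (p i) = some true) →
          (∀ i : ℕ, i % 4 = 3 → c (p i) = some false) →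
          (∀ q : ℤ × ℤ, (∀ i : ℕ, p i ≠ q) → c q = none) →
          RedWinsStd c := by
  classical
  refine ⟨ThreeForOne.strat, fun h => ThreeForOne.strat_spec h, ?_⟩
  intro p hp hσ c hred hblue hnone
  have hs : ∀ k : ℕ, p (4 * k) = ThreeForOne.stone1 (ThreeForOne.hist p (4 * k)) ∧
      p (4 * k + 1) = ThreeForOne.stone2 (ThreeForOne.hist p (4 * k)) ∧
      p (4 * k + 2) = ThreeForOne.stone3 (ThreeForOne.hist p (4 * k)) := by
    intro k
    obtain ⟨h1, h2, h3⟩ := hσ k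
    exact ⟨h1, h2, h3⟩
  have red_color : ∀ {m : ℕ} {q : ℤ × ℤ}, ThreeForOne.RedAt p m q → c q = some true := by
    rintro m q ⟨i, hi, h4, rfl⟩; exact hred i h4
  have band_claimed : ∀ q : ℤ × ℤ, (∃ k, ThreeForOne.eBand k = q) →
      c q = some true ∨ c q = some false := by
    rintro q ⟨k, rfl⟩
    obtain ⟨i, hi⟩ := ThreeForOne.band_played p hs k
    by_cases h4 : i % 4 = 3
    · right; rw [← hi]; exact hblue i h4
    · left; rw [← hi]; exact hred i h4
  have blue_of_c : ∀ q : ℤ × ℤ, c q = some false → ∃ i : ℕ, i % 4 = 3 ∧ p i = q := by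
    intro q hcq
    by_cases hfa : ∀ i, p i ≠ q
    · rw [hnone q hfa] at hcq; exact absurd hcq (by simp)
    · push_neg at hfa
      obtain ⟨i, hi⟩ := hfa
      by_cases h4 : i % 4 = 3
      · exact ⟨i, h4, hi⟩
      · have h5 := hred i h4
        rw [hi, hcq] at h5
        exact absurd h5 (by simp)
  have FA : ∀ n : ℤ, c (n, n) = some false →
      c (n - 1, n - 1) = some true ∧ c (n + 1, n + 1) = some true := by
    intro n hcn
    obtain ⟨i, h4, he⟩ := blue_of_c _ hcn
    have hb : ThreeForOne.BlueAt p (4 * i + 3) (n, n) := ⟨i, by omega, h4, he⟩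
    have h2 := (ThreeForOne.inv_all p hp hs i).1 n hb
    exact ⟨red_color h2.1, red_color h2.2⟩
  have FC1 : ∀ n : ℤ, c (n, n) = some false →
      (c (n - 1, n) = some false ∨ c (n, n + 1) = some false) →
      c (n, n - 1) = some true ∧ c (n + 1, n) = some true := by
    intro n hcn hcu
    obtain ⟨i, h4, he⟩ := blue_of_c _ hcn
    have hwit : ∃ j, j % 4 = 3 ∧ (p j = (n - 1, n) ∨ p j = (n, n + 1)) := by
      rcases hcu with hcu | hcu
      · obtain ⟨j, h4', he'⟩ := blue_of_c _ hcu; exact ⟨j, h4', Or.inl he'⟩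
      · obtain ⟨j, h4', he'⟩ := blue_of_c _ hcu; exact ⟨j, h4', Or.inr he'⟩
    obtain ⟨j, h4', hj⟩ := hwit
    have hb : ThreeForOne.BlueAt p (4 * (i + j) + 3) (n, n) := ⟨i, by omega, h4, he⟩
    have hbu : ThreeForOne.BlueAt p (4 * (i + j) + 3) (n - 1, n) ∨
        ThreeForOne.BlueAt p (4 * (i + j) + 3) (n, n + 1) := by
      rcases hj with hj | hj
      · exact Or.inl ⟨j, by omega, h4', hj⟩
      · exact Or.inr ⟨j, by omega, h4', hj⟩
    have h2 := ((ThreeForOne.inv_all p hp hs (i + j)).2.2 n hb).1 hbu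
    exact ⟨red_color h2.1, red_color h2.2⟩
  set U : Set ℤ := {n : ℤ | c (n, n) = some false} with hUdef
  have hUmem : ∀ n : ℤ, n ∈ U ↔ c (n, n) = some false := fun n => Iff.rfl
  set Dcond : ℤ → Prop := fun n => (c (n - 1, n) = some false ∨ c (n, n + 1) = some false)
    with hDdef
  apply ThreeForOne.chain_exists U c
    (fun n => if Dcond n then (n, n - 1) else (n - 1, n))
    (fun n => if Dcond n then (n + 1, n) else (n, n + 1))
  · -- hU1
    intro n hn
    rcases band_claimed (n, n) (ThreeForOne.eBand_surj0 n) with h | h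
    · exact h
    · exact absurd ((hUmem n).2 h) hn
  · -- hU2
    intro n hn
    intro hc1
    have h1 := (FA n ((hUmem n).1 hn)).2
    have h2 := (hUmem (n + 1)).1 hc1
    rw [h1] at h2
    exact absurd h2 (by simp)
  · -- hd
    intro n hn
    have hcn := (hUmem n).1 hn
    by_cases hD : Dcond n
    · obtain ⟨hA, hB⟩ := FC1 n hcn hD
      rw [if_pos hD, if_pos hD]
      refine ⟨hA, hB, ?_, ?_, ?_, ?_, ?_, ?_, ?_⟩
      · exact ThreeForOne.hexAdj_cases (Or.inl ⟨by ring, by ring⟩)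
      · exact ThreeForOne.hexAdj_cases (Or.inr (Or.inr (Or.inr (Or.inr (Or.inl ⟨by ring, by ring⟩)))))
      · exact ThreeForOne.hexAdj_cases (Or.inr (Or.inr (Or.inl ⟨by ring, by ring⟩)))
      · exact ⟨by omega, by omega⟩
      · exact ⟨by omega, by omega⟩
      · exact ⟨by omega, by omega⟩
      · exact ⟨by omega, by omega⟩
    · have hD' := hD
      rw [hDdef] at hD'
      push_neg at hD'
      have hA : c (n - 1, n) = some true := by
        rcases band_claimed (n - 1, n) (by
          have h9 := ThreeForOne.eBand_surj1 (n - 1)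
          rwa [show (n : ℤ) - 1 + 1 = n by ring] at h9) with h | h
        · exact h
        · exact absurd h hD'.1
      have hB : c (n, n + 1) = some true := by
        rcases band_claimed (n, n + 1) (ThreeForOne.eBand_surj1 n) with h | h
        · exact h
        · exact absurd h hD'.2
      rw [if_neg hD, if_neg hD]
      refine ⟨hA, hB, ?_, ?_, ?_, ?_, ?_, ?_, ?_⟩
      · exact ThreeForOne.hexAdj_cases (Or.inr (Or.inr (Or.inl ⟨by ring, by ring⟩)))
      · exact ThreeForOne.hexAdj_cases (Or.inr (Or.inr (Or.inr (Or.inr (Or.inl ⟨by ring, by ring⟩)))))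
      · exact ThreeForOne.hexAdj_cases (Or.inl ⟨by ring, by ring⟩)
      · exact ⟨by omega, by omega⟩
      · exact ⟨by omega, by omega⟩
      · exact ⟨by omega, by omega⟩
      · exact ⟨by omega, by omega⟩
end

section
/- The set of colorings of the infinite Hex board in which Red fulfills the standard winning condition is an analytic subset of the space of colorings equipped with the product topology. -/
/-- `Option Bool` carries the discrete topology. -/
instance : TopologicalSpace (Option Bool) := ⊥

/-- The set of colorings of the infinite Hex board in which Red fulfills the standard
winning condition is an analytic subset of the space of colorings, equipped with the
product topology (with `Option Bool` discrete). -/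
theorem redWinsStd_analyticSet :
    MeasureTheory.AnalyticSet {c : ℤ × ℤ → Option Bool | RedWinsStd c} := by
  classical
  haveI : DiscreteTopology (Option Bool) := ⟨rfl⟩
  letI : MeasurableSpace (Option Bool) := ⊤
  haveI : BorelSpace (Option Bool) := ⟨borel_eq_top_of_discrete.symm⟩
  set X := ((ℤ × ℤ → Option Bool) × (ℤ → ℤ × ℤ)) with hX
  set S : Set X := {p | IsRedChain p.1 p.2 ∧ RedConverges p.2} with hSdef
  have hev : ∀ n : ℤ, Measurable fun p : X => p.2 n := fun n =>
    (measurable_pi_apply n).comp measurable_snd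
  have hmeasZ : ∀ s : Set ((ℤ × ℤ) × (ℤ × ℤ)), MeasurableSet s := fun s =>
    s.to_countable.measurableSet
  have hC : MeasurableSet {p : X | IsRedChain p.1 p.2} := by
    have heq : {p : X | IsRedChain p.1 p.2} =
        ⋂ n : ℤ, (((fun p : X => (p.2 n, p.2 (n + 1))) ⁻¹' {r | HexAdj r.1 r.2}) ∩
          ⋃ q : ℤ × ℤ, (((fun p : X => p.2 n) ⁻¹' {q}) ∩
            ((fun p : X => p.1 q) ⁻¹' {some true}))) := by
      ext p
      simp only [Set.mem_setOf_eq, Set.mem_iInter, Set.mem_inter_iff, Set.mem_iUnion,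
        Set.mem_preimage, Set.mem_singleton_iff, IsRedChain]
      constructor
      · intro h n
        exact ⟨(h n).1, p.2 n, rfl, (h n).2⟩
      · intro h n
        obtain ⟨h1, q, hq, h2⟩ := h n
        exact ⟨h1, hq ▸ h2⟩
    rw [heq]
    refine MeasurableSet.iInter fun n => (MeasurableSet.inter ?_ ?_)
    · exact ((hev n).prodMk (hev (n + 1))) (hmeasZ _)
    · refine MeasurableSet.iUnion fun q => (MeasurableSet.inter ?_ ?_)
      · exact (hev n) ((Set.to_countable _).measurableSet)
      · exact ((measurable_pi_apply q).comp measurable_fst) trivial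
  have hB : MeasurableSet {p : X | RedConverges p.2} := by
    have heq : {p : X | RedConverges p.2} =
        ⋂ (a : ℤ) (b : ℤ), ⋃ (N : ℕ), ⋂ (n : ℕ) (_ : N ≤ n),
          (((fun p : X => p.2 (n : ℤ)) ⁻¹' {q | a < q.1 ∧ b < q.2}) ∩
            ((fun p : X => p.2 (-(n : ℤ))) ⁻¹' {q | q.1 < a ∧ q.2 < b})) := by
      ext p
      simp only [Set.mem_setOf_eq, Set.mem_iInter, Set.mem_iUnion, Set.mem_inter_iff,
        Set.mem_preimage, RedConverges]
      constructor
      · intro h a b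
        obtain ⟨N, hN⟩ := h a b
        exact ⟨N, fun n hn => ⟨⟨(hN n hn).1, (hN n hn).2.1⟩, (hN n hn).2.2⟩⟩
      · intro h a b
        obtain ⟨N, hN⟩ := h a b
        exact ⟨N, fun n hn => ⟨(hN n hn).1.1, (hN n hn).1.2, (hN n hn).2⟩⟩
    rw [heq]
    refine MeasurableSet.iInter fun a => MeasurableSet.iInter fun b =>
      MeasurableSet.iUnion fun N => MeasurableSet.iInter fun n =>
      MeasurableSet.iInter fun _ => MeasurableSet.inter ?_ ?_
    · exact (hev _) ((Set.to_countable _).measurableSet)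
    · exact (hev _) ((Set.to_countable _).measurableSet)
  have hS : MeasurableSet S := hC.inter hB
  have hA : MeasureTheory.AnalyticSet S := by
    haveI : TopologicalSpace.SeparableSpace (ℤ × ℤ → Option Bool) := inferInstance
    haveI : TopologicalSpace.IsCompletelyMetrizableSpace (ℤ × ℤ → Option Bool) := inferInstance
    haveI : PolishSpace (ℤ × ℤ → Option Bool) := inferInstance
    haveI : BorelSpace (ℤ × ℤ → Option Bool) := inferInstance
    exact hS.analyticSet
  have himg := hA.image_of_continuous (continuous_fst)
  have : Prod.fst '' S = {c : ℤ × ℤ → Option Bool | RedWinsStd c} := by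
    ext c
    simp only [Set.mem_image, Set.mem_setOf_eq, RedWinsStd, hSdef]
    constructor
    · rintro ⟨⟨c', f⟩, ⟨h1, h2⟩, rfl⟩
      exact ⟨f, h1, h2⟩
    · rintro ⟨f, h1, h2⟩
      exact ⟨(c, f), ⟨h1, h2⟩, rfl⟩
  rwa [this] at himg
end
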